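/- (Recursive Extension Lemma, Lemma 4.8.) Let n ≥ 1 and 1 ≤ k ≤ n. Let K be a finite geometric simplicial complex in ℝ^N with dim K = n+1, and let L be a subcomplex of K with dim L ≤ n such that every simplex of K not belonging to L is a face of some (n+1)-simplex of K; for 0 ≤ j ≤ n write M[j] = |L| ∪ |K_j|, with the subspace topology from ℝ^N. Let X be a topological space and let 𝒰, 𝒱, 𝒲 be open covers of X such that 𝒱 is a barycentric-star refinement of 𝒰 and 𝒲 is a (k−1)-barycentric-star refinement of 𝒱. Suppose f : M[k−1] → X is a continuous map such that for every (n+1)-simplex σ of K there is W_σ ∈ 𝒲 with f(σ ∩ M[k−1]) ⊆ W_σ. Then there exists a continuous map g : M[k] → X extending f such that for every (n+1)-simplex σ of K there is U_σ ∈ 𝒰 with g(σ ∩ M[k]) ⊆ U_σ. -/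

import Mathlib

open Set Metric Topology Geometry

noncomputable section

/-- The unit `k`-sphere, as a subset of `ℝ^{k+1}`. -/
abbrev unitSphere (k : ℕ) : Set (EuclideanSpace ℝ (Fin (k + 1))) := sphere 0 1

/-- The closed unit `(k+1)`-ball, as a subset of `ℝ^{k+1}`. -/
abbrev unitBall (k : ℕ) : Set (EuclideanSpace ℝ (Fin (k + 1))) := closedBall 0 1

/-- `g : D^{k+1} → X` extends `f : S^k → X`. -/
def ExtendsTo {X : Type*} [TopologicalSpace X] {k : ℕ}
    (f : C(unitSphere k, X)) (g : C(unitBall k, X)) : Prop :=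
  ∀ (y : EuclideanSpace ℝ (Fin (k + 1))) (hy : y ∈ unitSphere k),
    g ⟨y, sphere_subset_closedBall hy⟩ = f ⟨y, hy⟩

/-- `𝒰` is an open cover of `X`. -/
def IsOpenCover {X : Type*} [TopologicalSpace X] (𝒰 : Set (Set X)) : Prop :=
  (∀ U ∈ 𝒰, IsOpen U) ∧ ⋃₀ 𝒰 = univ

/-- The star `St(x,𝒱)` of a point with respect to a cover. -/
def ptStar {X : Type*} (x : X) (𝒱 : Set (Set X)) : Set X :=
  ⋃₀ {V ∈ 𝒱 | x ∈ V}

/-- `𝒱` refines `𝒰`. -/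
def Refines {X : Type*} (𝒱 𝒰 : Set (Set X)) : Prop :=
  ∀ V ∈ 𝒱, ∃ U ∈ 𝒰, V ⊆ U

/-- `𝒱` is a barycentric-star refinement of `𝒰`. -/
def BStarRefines {X : Type*} (𝒱 𝒰 : Set (Set X)) : Prop :=
  ∀ x : X, ∃ U ∈ 𝒰, ptStar x 𝒱 ⊆ U

/-- `𝒱` is an `m`-barycentric-star refinement of `𝒰`. -/
def NBStarRefines {X : Type*} [TopologicalSpace X] (m : ℕ) (𝒱 𝒰 : Set (Set X)) : Prop :=
  Refines 𝒱 𝒰 ∧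
    ∀ k ≤ m, ∀ x : X, ∀ f : C(unitSphere k, X), range f ⊆ ptStar x 𝒱 →
      ∃ U ∈ 𝒰, ptStar x 𝒱 ⊆ U ∧ ∃ g : C(unitBall k, X), range g ⊆ U ∧ ExtendsTo f g

variable {N : ℕ}

/-- The underlying point set of the `j`-skeleton of a geometric simplicial complex. -/
def skelSpace (K : SimplicialComplex ℝ (EuclideanSpace ℝ (Fin N))) (j : ℕ) :
    Set (EuclideanSpace ℝ (Fin N)) :=
  {x | ∃ s ∈ K.faces, s.card ≤ j + 1 ∧ x ∈ convexHull ℝ (s : Set (EuclideanSpace ℝ (Fin N)))}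

/-- `M[j] = |L| ∪ |K_j|`. -/
def Mset (K L : SimplicialComplex ℝ (EuclideanSpace ℝ (Fin N))) (j : ℕ) :
    Set (EuclideanSpace ℝ (Fin N)) :=
  L.space ∪ skelSpace K j

lemma Mset_mono (K L : SimplicialComplex ℝ (EuclideanSpace ℝ (Fin N))) {j j' : ℕ}
    (h : j ≤ j') : Mset K L j ⊆ Mset K L j' := by
  rintro x (hx | ⟨s, hs, hcard, hxs⟩)
  · exact Or.inl hx
  · exact Or.inr ⟨s, hs, hcard.trans (by omega), hxs⟩




variable {N : ℕ}

section AffMap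

variable {m : ℕ}

/-- The affine map sending an affine basis `b` of `ℝ^{m+1}` to prescribed points `p`. -/
def affOfBasis (b : AffineBasis (Fin (m + 2)) ℝ (EuclideanSpace ℝ (Fin (m + 1))))
    (p : Fin (m + 2) → EuclideanSpace ℝ (Fin N)) :
    EuclideanSpace ℝ (Fin (m + 1)) →ᵃ[ℝ] EuclideanSpace ℝ (Fin N) where
  toFun := fun x => ∑ i, b.coord i x • p i
  linear := ∑ i, LinearMap.smulRight (b.coord i).linear (p i)
  map_vadd' := by
    intro x v
    simp only [LinearMap.coe_sum, Finset.sum_apply, LinearMap.smulRight_apply]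
    have : ∀ i : Fin (m + 2), b.coord i (v + x) = (b.coord i).linear v + b.coord i x := by
      intro i
      simpa [vadd_eq_add] using (b.coord i).map_vadd x v
    simp only [vadd_eq_add, this, add_smul]
    rw [Finset.sum_add_distrib]

lemma affOfBasis_apply (b : AffineBasis (Fin (m + 2)) ℝ (EuclideanSpace ℝ (Fin (m + 1))))
    (p : Fin (m + 2) → EuclideanSpace ℝ (Fin N)) (x : EuclideanSpace ℝ (Fin (m + 1))) :
    affOfBasis b p x = ∑ i, b.coord i x • p i := rfl

lemma affOfBasis_eq_affineCombination
    (b : AffineBasis (Fin (m + 2)) ℝ (EuclideanSpace ℝ (Fin (m + 1))))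
    (p : Fin (m + 2) → EuclideanSpace ℝ (Fin N)) (x : EuclideanSpace ℝ (Fin (m + 1))) :
    affOfBasis b p x = Finset.univ.affineCombination ℝ p (fun i => b.coord i x) := by
  rw [affOfBasis_apply,
    Finset.univ.affineCombination_eq_linear_combination p _ (b.sum_coord_apply_eq_one x)]

lemma affOfBasis_injective (b : AffineBasis (Fin (m + 2)) ℝ (EuclideanSpace ℝ (Fin (m + 1))))
    {p : Fin (m + 2) → EuclideanSpace ℝ (Fin N)} (hp : AffineIndependent ℝ p) :
    Function.Injective (affOfBasis b p) := by
  intro x y hxy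
  rw [affOfBasis_eq_affineCombination, affOfBasis_eq_affineCombination] at hxy
  have := (affineIndependent_iff_eq_of_fintype_affineCombination_eq ℝ p).1 hp
    (fun i => b.coord i x) (fun i => b.coord i y)
    (b.sum_coord_apply_eq_one x) (b.sum_coord_apply_eq_one y) hxy
  exact b.ext_elem fun i => congrFun this i

end AffMap

private lemma simplex_homeo (m : ℕ) (t : Finset (EuclideanSpace ℝ (Fin N)))
    (hcard : t.card = m + 2)
    (hindep : AffineIndependent ℝ ((↑) : t → EuclideanSpace ℝ (Fin N))) :
    ∃ ψ : (closedBall (0 : EuclideanSpace ℝ (Fin (m + 1))) 1 :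
          Set (EuclideanSpace ℝ (Fin (m + 1)))) ≃ₜ
        (convexHull ℝ (t : Set (EuclideanSpace ℝ (Fin N)))),
      ∀ y : (closedBall (0 : EuclideanSpace ℝ (Fin (m + 1))) 1 :
          Set (EuclideanSpace ℝ (Fin (m + 1)))),
        ((y : EuclideanSpace ℝ (Fin (m + 1))) ∈
            sphere (0 : EuclideanSpace ℝ (Fin (m + 1))) 1 ↔
        ∃ a ∈ t, (ψ y : EuclideanSpace ℝ (Fin N)) ∈
          convexHull ℝ ((t : Set (EuclideanSpace ℝ (Fin N))) \ {a})) := by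
  classical
  -- an affine basis of E'
  obtain ⟨b⟩ : Nonempty (AffineBasis (Fin (m + 2)) ℝ (EuclideanSpace ℝ (Fin (m + 1)))) :=
    AffineBasis.exists_affineBasis_of_finiteDimensional
      (by simp [finrank_euclideanSpace_fin])
  -- enumerate t
  let e : Fin (m + 2) ≃ {x // x ∈ t} := (t.equivFin.trans (finCongr hcard)).symm
  let p : Fin (m + 2) → EuclideanSpace ℝ (Fin N) := fun i => (e i : EuclideanSpace ℝ (Fin N))
  have hpinj : Function.Injective p :=
    Subtype.coe_injective.comp e.injective
  have hpt : ∀ i, p i ∈ t := fun i => (e i).2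
  have htp : ∀ a ∈ t, ∃ i, p i = a := fun a ha => ⟨e.symm ⟨a, ha⟩, by simp [p]⟩
  have hrange : range p = (t : Set (EuclideanSpace ℝ (Fin N))) := by
    ext y
    constructor
    · rintro ⟨i, rfl⟩; exact hpt i
    · intro hy; exact htp y hy
  have hp : AffineIndependent ℝ p := hindep.comp_embedding e.toEmbedding
  set A := affOfBasis b p with hA
  have hAb : ∀ j, A (b j) = p j := by
    intro j
    rw [hA, affOfBasis_apply]
    have : ∀ i : Fin (m + 2), b.coord i (b j) • p i = (if j = i then p i else 0) := by
      intro i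
      rcases eq_or_ne i j with rfl | hij
      · simp [b.coord_apply_eq]
      · simp [b.coord_apply_ne hij, hij.symm]
    simp [this]
  have hAinj : Function.Injective A := affOfBasis_injective b hp
  set S' : Set (EuclideanSpace ℝ (Fin (m + 1))) := convexHull ℝ (range ⇑b) with hS'
  have hS'compact : IsCompact S' := (finite_range ⇑b).isCompact_convexHull ℝ
  have hS'conv : Convex ℝ S' := convex_convexHull _ _
  have hS'int : (interior S').Nonempty := ⟨_, b.centroid_mem_interior_convexHull⟩
  obtain ⟨h, hi1, hc1, hf1⟩ :=
    exists_homeomorph_image_interior_closure_frontier_eq_unitBall hS'conv hS'int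
      hS'compact.isBounded
  rw [hS'compact.isClosed.closure_eq] at hc1
  -- image of S' under A
  have hAim : A '' S' = convexHull ℝ (t : Set (EuclideanSpace ℝ (Fin N))) := by
    rw [hS', AffineMap.image_convexHull, ← range_comp]
    congr 1
    rw [show ⇑A ∘ ⇑b = p from funext hAb, hrange]
  -- the zero sets of the barycentric coordinates
  have hZi : ∀ i : Fin (m + 2),
      S' ∩ {x | b.coord i x = 0} = convexHull ℝ (⇑b '' {j | j ≠ i}) := by
    intro i
    apply Subset.antisymm
    · rintro x ⟨hxS, hxi⟩
      have hw0 : ∀ j, 0 ≤ b.coord j x := by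
        rw [hS', b.convexHull_eq_nonneg_coord] at hxS; exact hxS
      have hw1 : ∑ j, b.coord j x = 1 := b.sum_coord_apply_eq_one x
      have hx : x = Finset.univ.centerMass (fun j => b.coord j x) ⇑b := by
        rw [← affineCombination_eq_centerMass hw1, b.affineCombination_coord_eq_self]
      have hsub : (Finset.univ.erase i).centerMass (fun j => b.coord j x) ⇑b
          = Finset.univ.centerMass (fun j => b.coord j x) ⇑b :=
        Finset.centerMass_subset _ (Finset.subset_univ _)
          (fun j _ hj => by
            have : j = i := by simpa using hj
            simpa [this] using hxi)
      rw [hx, ← hsub]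
      apply Finset.centerMass_mem_convexHull
      · exact fun j _ => hw0 j
      · have : ∑ j ∈ Finset.univ.erase i, b.coord j x = 1 := by
          rw [← hw1]
          exact Finset.sum_erase _ (by simpa using hxi)
        rw [this]; exact one_pos
      · intro j hj
        exact mem_image_of_mem _ (by simpa using (Finset.mem_erase.1 hj).1)
    · apply convexHull_min
      · rintro x ⟨j, hj, rfl⟩
        exact ⟨subset_convexHull _ _ (mem_range_self j), b.coord_apply_ne (Ne.symm hj)⟩
      · exact (hS'conv.inter ((convex_singleton (0:ℝ)).affine_preimage (b.coord i)))
  have hfrontier : frontier S' = ⋃ i, (S' ∩ {x | b.coord i x = 0}) := by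
    rw [hS'compact.isClosed.frontier_eq, hS', b.interior_convexHull,
      b.convexHull_eq_nonneg_coord]
    ext x
    simp only [mem_diff, mem_setOf_eq, mem_iUnion, mem_inter_iff, not_forall]
    constructor
    · rintro ⟨h0, ⟨i, hi⟩⟩
      exact ⟨i, h0, le_antisymm (not_lt.1 hi) (h0 i)⟩
    · rintro ⟨i, h0, hi⟩
      exact ⟨h0, ⟨i, by rw [hi]; exact lt_irrefl 0⟩⟩
  -- image of a coordinate zero-set
  have hAZi : ∀ i : Fin (m + 2), A '' (S' ∩ {x | b.coord i x = 0})
      = convexHull ℝ ((t : Set (EuclideanSpace ℝ (Fin N))) \ {p i}) := by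
    intro i
    rw [hZi i, AffineMap.image_convexHull]
    congr 1
    rw [← image_comp, show ⇑A ∘ ⇑b = p from funext hAb]
    ext y
    simp only [mem_image, mem_setOf_eq, mem_diff, Finset.mem_coe, mem_singleton_iff]
    constructor
    · rintro ⟨j, hj, rfl⟩
      exact ⟨hpt j, fun hy => hj (hpinj hy)⟩
    · rintro ⟨hyt, hyne⟩
      obtain ⟨j, rfl⟩ := htp y hyt
      exact ⟨j, fun hji => hyne (by rw [hji]), rfl⟩
  -- build the homeomorphism
  haveI : CompactSpace S' := isCompact_iff_compactSpace.mp hS'compact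
  let eq2 : S' ≃ ↥(convexHull ℝ (t : Set (EuclideanSpace ℝ (Fin N)))) :=
    Equiv.ofBijective (fun x => ⟨A x, hAim ▸ mem_image_of_mem _ x.2⟩)
      (by
        constructor
        · intro x y hxy
          exact Subtype.ext (hAinj (congrArg Subtype.val hxy))
        · rintro ⟨y, hy⟩
          rw [← hAim] at hy
          obtain ⟨x, hx, rfl⟩ := hy
          exact ⟨⟨x, hx⟩, rfl⟩)
  have heq2cont : Continuous eq2 := by
    apply Continuous.subtype_mk
    exact A.continuous_of_finiteDimensional.comp continuous_subtype_val
  let e₂ : S' ≃ₜ ↥(convexHull ℝ (t : Set (EuclideanSpace ℝ (Fin N)))) :=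
    Continuous.homeoOfEquivCompactToT2 (f := eq2) heq2cont
  let e₁ : S' ≃ₜ (closedBall (0 : EuclideanSpace ℝ (Fin (m + 1))) 1 :
      Set (EuclideanSpace ℝ (Fin (m + 1)))) :=
    (h.image S').trans (Homeomorph.setCongr hc1)
  refine ⟨e₁.symm.trans e₂, ?_⟩
  intro y
  set x : S' := e₁.symm y with hx
  have hxy : h (x : EuclideanSpace ℝ (Fin (m + 1))) = (y : EuclideanSpace ℝ (Fin (m + 1))) := by
    have h1 : e₁ x = y := by rw [hx, Homeomorph.apply_symm_apply]
    have h2 := congrArg Subtype.val h1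
    exact h2
  have hval : ((e₁.symm.trans e₂) y : EuclideanSpace ℝ (Fin N))
      = A (x : EuclideanSpace ℝ (Fin (m + 1))) := rfl
  have step1 : ((y : EuclideanSpace ℝ (Fin (m + 1))) ∈
      sphere (0 : EuclideanSpace ℝ (Fin (m + 1))) 1) ↔
      (x : EuclideanSpace ℝ (Fin (m + 1))) ∈ frontier S' := by
    rw [← hf1, ← hxy]
    exact ⟨fun hh => (h.injective.mem_set_image).1 hh, fun hh => mem_image_of_mem _ hh⟩
  rw [step1, hfrontier]
  simp only [mem_iUnion]
  constructor
  · rintro ⟨i, hi⟩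
    refine ⟨p i, hpt i, ?_⟩
    rw [hval, ← hAZi i]
    exact mem_image_of_mem _ hi
  · rintro ⟨a, hat, ha⟩
    obtain ⟨i, rfl⟩ := htp a hat
    rw [hval, ← hAZi i] at ha
    obtain ⟨z, hz, hzeq⟩ := ha
    exact ⟨i, by rwa [hAinj hzeq] at hz⟩

section MainAux

open Set Metric

variable {N : ℕ}

lemma vertex_mem_Mset (K L : SimplicialComplex ℝ (EuclideanSpace ℝ (Fin N))) (j : ℕ)
    {s : Finset (EuclideanSpace ℝ (Fin N))} (hs : s ∈ K.faces)
    {v : EuclideanSpace ℝ (Fin N)} (hv : v ∈ s) : v ∈ Mset K L j := by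
  refine Or.inr ⟨{v}, K.down_closed hs (by simpa using hv) (by simp), by simp, ?_⟩
  exact subset_convexHull _ _ (by simp)

lemma Mset_isClosed (K L : SimplicialComplex ℝ (EuclideanSpace ℝ (Fin N)))
    (hKfin : K.faces.Finite) (hLK : L.faces ⊆ K.faces) (j : ℕ) :
    IsClosed (Mset K L j) := by
  have heq : Mset K L j = ⋃ s ∈ (L.faces ∪ {s ∈ K.faces | s.card ≤ j + 1} :
      Set (Finset (EuclideanSpace ℝ (Fin N)))),
      convexHull ℝ (s : Set (EuclideanSpace ℝ (Fin N))) := by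
    ext x
    simp only [Mset, skelSpace, SimplicialComplex.space, Set.mem_union, Set.mem_iUnion,
      Set.mem_setOf_eq]
    constructor
    · rintro (h | ⟨s, hs, hc, hx⟩)
      · obtain ⟨s, hs, hx⟩ := by simpa only [Set.mem_iUnion] using h
        exact ⟨s, Or.inl hs, hx⟩
      · exact ⟨s, Or.inr ⟨hs, hc⟩, hx⟩
    · rintro ⟨s, (hs | ⟨hs, hc⟩), hx⟩
      · exact Or.inl ⟨s, hs, hx⟩
      · exact Or.inr ⟨s, hs, hc, hx⟩
  rw [heq]
  apply Set.Finite.isClosed_biUnion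
  · exact (hKfin.subset hLK).union (hKfin.subset fun s hs => hs.1)
  · intro s _
    exact (s.finite_toSet.isCompact_convexHull ℝ).isClosed

end MainAux

/-- Lemma 4.8 (Recursive Extensions). -/
theorem recursive_extension
    (n k : ℕ) (hn : 1 ≤ n) (hk1 : 1 ≤ k) (hkn : k ≤ n)
    (K L : SimplicialComplex ℝ (EuclideanSpace ℝ (Fin N)))
    (hKfin : K.faces.Finite)
    (hKdim : ∀ s ∈ K.faces, s.card ≤ n + 2)
    (hKtop : ∃ s ∈ K.faces, s.card = n + 2)
    (hLK : L.faces ⊆ K.faces)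
    (hLdim : ∀ s ∈ L.faces, s.card ≤ n + 1)
    (hfull : ∀ s ∈ K.faces, s ∉ L.faces → ∃ t ∈ K.faces, t.card = n + 2 ∧ s ⊆ t)
    {X : Type*} [TopologicalSpace X]
    (𝒰 𝒱 𝒲 : Set (Set X))
    (h𝒰 : IsOpenCover 𝒰) (h𝒱 : IsOpenCover 𝒱) (h𝒲 : IsOpenCover 𝒲)
    (hVU : BStarRefines 𝒱 𝒰) (hWV : NBStarRefines (k - 1) 𝒲 𝒱)
    (f : C(Mset K L (k - 1), X))
    (hf : ∀ s ∈ K.faces, s.card = n + 2 → ∃ W ∈ 𝒲,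
      ∀ y : Mset K L (k - 1),
        (y : EuclideanSpace ℝ (Fin N)) ∈ convexHull ℝ (s : Set (EuclideanSpace ℝ (Fin N))) →
          f y ∈ W) :
    ∃ g : C(Mset K L k, X),
      (∀ y : Mset K L (k - 1), g (Set.inclusion (Mset_mono K L (Nat.sub_le k 1)) y) = f y) ∧
      ∀ s ∈ K.faces, s.card = n + 2 → ∃ U ∈ 𝒰,
        ∀ y : Mset K L k,
          (y : EuclideanSpace ℝ (Fin N)) ∈ convexHull ℝ (s : Set (EuclideanSpace ℝ (Fin N))) →
            g y ∈ U := by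
    classical
  obtain ⟨m, rfl⟩ : ∃ m, k = m + 1 := ⟨k - 1, (Nat.succ_pred_eq_of_pos hk1).symm⟩
  -- `m + 1 - 1` is definitionally `m`
  set T : Set (Finset (EuclideanSpace ℝ (Fin N))) :=
    {t | t ∈ K.faces ∧ t.card = m + 2 ∧ t ∉ L.faces} with hT
  have hTfin : T.Finite := hKfin.subset fun t ht => ht.1
  -- proper faces of `t ∈ T` lie in `Mset K L m`
  have hbdM : ∀ t ∈ T, ∀ a ∈ t,
      convexHull ℝ ((t : Set (EuclideanSpace ℝ (Fin N))) \ {a}) ⊆ Mset K L m := by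
    intro t ht a hat x hx
    have herase : ((t : Set (EuclideanSpace ℝ (Fin N))) \ {a})
        = ((t.erase a : Finset (EuclideanSpace ℝ (Fin N))) :
            Set (EuclideanSpace ℝ (Fin N))) := by
      simp [Finset.coe_erase]
    rw [herase] at hx
    have hcarde : (t.erase a).card = m + 1 := by
      rw [Finset.card_erase_of_mem hat, ht.2.1]
      omega
    have hne : t.erase a ≠ ∅ := by
      intro hemp
      rw [hemp] at hcarde
      simp at hcarde
    exact Or.inr ⟨t.erase a, K.down_closed ht.1 (Finset.erase_subset _ _) (Finset.nonempty_iff_ne_empty.2 hne),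
      le_of_eq hcarde, hx⟩
  -- a point of the hull of `t ∈ T` lying in `Mset K L m` is in a proper face of `t`
  have hkey : ∀ t ∈ T, ∀ s ∈ K.faces, ¬ t ⊆ s →
      ∀ x, x ∈ convexHull ℝ (t : Set (EuclideanSpace ℝ (Fin N))) →
      x ∈ convexHull ℝ (s : Set (EuclideanSpace ℝ (Fin N))) →
      ∃ a ∈ t, x ∈ convexHull ℝ ((t : Set (EuclideanSpace ℝ (Fin N))) \ {a}) := by
    intro t ht s hs hns x hxt hxs
    obtain ⟨a, hat, hanots⟩ := Finset.not_subset.1 hns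
    refine ⟨a, hat, ?_⟩
    have hinter := K.inter_subset_convexHull ht.1 hs ⟨hxt, hxs⟩
    refine convexHull_mono ?_ hinter
    rintro y ⟨hyt, hys⟩
    exact ⟨hyt, fun h => hanots (by rwa [Set.mem_singleton_iff.1 h] at hys)⟩
  have hcap : ∀ t ∈ T, ∀ x, x ∈ convexHull ℝ (t : Set (EuclideanSpace ℝ (Fin N))) →
      x ∈ Mset K L m →
      ∃ a ∈ t, x ∈ convexHull ℝ ((t : Set (EuclideanSpace ℝ (Fin N))) \ {a}) := by
    intro t ht x hxt hxM
    obtain (hxL | ⟨s, hs, hscard, hxs⟩) := hxM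
    · obtain ⟨s, hsL, hxs⟩ := SimplicialComplex.mem_space_iff.1 hxL
      have hns : ¬ t ⊆ s := by
        intro hsub
        refine ht.2.2 (L.down_closed hsL hsub (Finset.nonempty_iff_ne_empty.2 ?_))
        intro hemp
        have hcc := ht.2.1
        rw [hemp, Finset.card_empty] at hcc
        omega
      exact hkey t ht s (hLK hsL) hns x hxt hxs
    · have hns : ¬ t ⊆ s := by
        intro hsub
        have := Finset.card_le_card hsub
        rw [ht.2.1] at this
        omega
      exact hkey t ht s hs hns x hxt hxs
  -- points of `Mset K L (m+1)` outside `Mset K L m` are in the hull of some `t ∈ T`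
  have hcover : ∀ y : EuclideanSpace ℝ (Fin N), y ∈ Mset K L (m + 1) → y ∉ Mset K L m →
      ∃ t ∈ T, y ∈ convexHull ℝ (t : Set (EuclideanSpace ℝ (Fin N))) := by
    intro y hy hy0
    obtain (hyL | ⟨s, hs, hscard, hys⟩) := hy
    · exact absurd (Or.inl hyL) hy0
    · rcases Nat.lt_or_ge s.card (m + 2) with hlt | hge
      · exact absurd (Or.inr ⟨s, hs, by omega, hys⟩) hy0
      · have hcard : s.card = m + 2 := le_antisymm hscard hge
        by_cases hsL : s ∈ L.faces
        · refine absurd (Or.inl ?_) hy0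
          exact Set.mem_biUnion hsL hys
        · exact ⟨s, ⟨hs, hcard, hsL⟩, hys⟩
  -- the per-simplex data
  have main : ∀ t, ∀ ht : t ∈ T,
      ∃ (ψ : (closedBall (0 : EuclideanSpace ℝ (Fin (m + 1))) 1 :
            Set (EuclideanSpace ℝ (Fin (m + 1)))) ≃ₜ
          (convexHull ℝ (t : Set (EuclideanSpace ℝ (Fin N)))))
        (V : Set X) (z : Mset K L m) (gD : C(unitBall m, X)),
        V ∈ 𝒱 ∧ ptStar (f z) 𝒲 ⊆ V ∧
        ((z : EuclideanSpace ℝ (Fin N)) ∈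
          convexHull ℝ (t : Set (EuclideanSpace ℝ (Fin N)))) ∧
        (∀ y : (closedBall (0 : EuclideanSpace ℝ (Fin (m + 1))) 1 :
            Set (EuclideanSpace ℝ (Fin (m + 1)))),
          ((y : EuclideanSpace ℝ (Fin (m + 1))) ∈
              sphere (0 : EuclideanSpace ℝ (Fin (m + 1))) 1 ↔
            ∃ a ∈ t, (ψ y : EuclideanSpace ℝ (Fin N)) ∈
              convexHull ℝ ((t : Set (EuclideanSpace ℝ (Fin N))) \ {a}))) ∧
        range ⇑gD ⊆ V ∧
        (∀ (y : (closedBall (0 : EuclideanSpace ℝ (Fin (m + 1))) 1 :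
            Set (EuclideanSpace ℝ (Fin (m + 1)))))
          (_ : (y : EuclideanSpace ℝ (Fin (m + 1))) ∈
              sphere (0 : EuclideanSpace ℝ (Fin (m + 1))) 1)
          (hm' : (ψ y : EuclideanSpace ℝ (Fin N)) ∈ Mset K L m),
          gD y = f ⟨(ψ y : EuclideanSpace ℝ (Fin N)), hm'⟩) := by
    intro t ht
    obtain ⟨ψ, hψ⟩ := simplex_homeo m t ht.2.1 (K.indep ht.1)
    obtain ⟨σ, hσK, hσcard, htσ⟩ := hfull t ht.1 ht.2.2
    obtain ⟨W, hW𝒲, hWf⟩ := hf σ hσK hσcard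
    -- pick a boundary point of t
    have h2le : 1 < t.card := by rw [ht.2.1]; omega
    obtain ⟨a, hat, c, hct, hac⟩ := Finset.one_lt_card.1 h2le
    have hzbd : c ∈ convexHull ℝ ((t : Set (EuclideanSpace ℝ (Fin N))) \ {a}) :=
      subset_convexHull _ _ ⟨hct, fun h => hac (Set.mem_singleton_iff.1 h).symm⟩
    have hzM : c ∈ Mset K L m := hbdM t ht a hat hzbd
    set z : ↥(Mset K L m) := ⟨c, hzM⟩ with hz
    have hzt : (z : EuclideanSpace ℝ (Fin N)) ∈
        convexHull ℝ (t : Set (EuclideanSpace ℝ (Fin N))) :=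
      subset_convexHull _ _ hct
    have htσ' : convexHull ℝ (t : Set (EuclideanSpace ℝ (Fin N))) ⊆
        convexHull ℝ (σ : Set (EuclideanSpace ℝ (Fin N))) :=
      convexHull_mono (Finset.coe_subset.2 htσ)
    have hfz : f z ∈ W := hWf z (htσ' hzt)
    -- the map on the sphere
    have hψM : ∀ y : (closedBall (0 : EuclideanSpace ℝ (Fin (m + 1))) 1 :
        Set (EuclideanSpace ℝ (Fin (m + 1)))),
        (y : EuclideanSpace ℝ (Fin (m + 1))) ∈
          sphere (0 : EuclideanSpace ℝ (Fin (m + 1))) 1 →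
        (ψ y : EuclideanSpace ℝ (Fin N)) ∈ Mset K L m := by
      intro y hy
      obtain ⟨a', hat', h'⟩ := (hψ y).1 hy
      exact hbdM t ht a' hat' h'
    let fR : C(unitSphere m, X) :=
      ⟨fun y => f ⟨(ψ ⟨(y : EuclideanSpace ℝ (Fin (m + 1))),
          sphere_subset_closedBall y.2⟩ : EuclideanSpace ℝ (Fin N)),
          hψM _ y.2⟩, by
        apply f.continuous.comp
        apply Continuous.subtype_mk
        exact continuous_subtype_val.comp (ψ.continuous.comp
          (Continuous.subtype_mk continuous_subtype_val _))⟩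
    have hfRrange : range ⇑fR ⊆ ptStar (f z) 𝒲 := by
      rintro _ ⟨y, rfl⟩
      have hmem : ((ψ ⟨(y : EuclideanSpace ℝ (Fin (m + 1))),
          sphere_subset_closedBall y.2⟩ : EuclideanSpace ℝ (Fin N))) ∈
          convexHull ℝ (σ : Set (EuclideanSpace ℝ (Fin N))) :=
        htσ' (ψ _).2
      have : fR y ∈ W := hWf _ hmem
      exact ⟨W, ⟨hW𝒲, hfz⟩, this⟩
    obtain ⟨V, hV𝒱, hptV, gD, hgDrange, hgDext⟩ :=
      hWV.2 m (Nat.le_refl m) (f z) fR hfRrange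
    refine ⟨ψ, V, z, gD, hV𝒱, hptV, hzt, hψ, hgDrange, ?_⟩
    intro y hy hm'
    obtain ⟨v, hv⟩ := y
    have h1 := hgDext v hy
    exact h1
  choose ψ V z gD hV𝒱 hptV hzt hψbd hgDrange hgDf using main
  -- define the extension
  set G : ↥(Mset K L (m + 1)) → X := fun y =>
    if h0 : (y : EuclideanSpace ℝ (Fin N)) ∈ Mset K L m then f ⟨y, h0⟩
    else
      gD _ (Classical.choose_spec (hcover y y.2 h0)).1
        ((ψ _ (Classical.choose_spec (hcover y y.2 h0)).1).symm
          ⟨y, (Classical.choose_spec (hcover y y.2 h0)).2⟩) with hG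
  have hGf : ∀ (y : ↥(Mset K L (m + 1)))
      (h0 : (y : EuclideanSpace ℝ (Fin N)) ∈ Mset K L m), G y = f ⟨y, h0⟩ := by
    intro y h0
    simp only [hG]
    rw [dif_pos h0]
  have hcongr : ∀ (y : ↥(Mset K L (m + 1))) (t₁ t₂ : Finset (EuclideanSpace ℝ (Fin N)))
      (h₁ : t₁ ∈ T) (h₂ : t₂ ∈ T) (heq : t₁ = t₂)
      (hy₁ : (y : EuclideanSpace ℝ (Fin N)) ∈
        convexHull ℝ (t₁ : Set (EuclideanSpace ℝ (Fin N))))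
      (hy₂ : (y : EuclideanSpace ℝ (Fin N)) ∈
        convexHull ℝ (t₂ : Set (EuclideanSpace ℝ (Fin N)))),
      gD t₁ h₁ ((ψ t₁ h₁).symm ⟨y, hy₁⟩) = gD t₂ h₂ ((ψ t₂ h₂).symm ⟨y, hy₂⟩) := by
    rintro y t₁ t₂ h₁ h₂ rfl hy₁ hy₂
    rfl
  have hGt : ∀ (t) (ht : t ∈ T) (y : ↥(Mset K L (m + 1)))
      (hy : (y : EuclideanSpace ℝ (Fin N)) ∈
        convexHull ℝ (t : Set (EuclideanSpace ℝ (Fin N)))),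
      G y = gD t ht ((ψ t ht).symm ⟨y, hy⟩) := by
    intro t ht y hy
    by_cases h0 : (y : EuclideanSpace ℝ (Fin N)) ∈ Mset K L m
    · rw [hGf y h0]
      set yb := (ψ t ht).symm ⟨(y : EuclideanSpace ℝ (Fin N)), hy⟩ with hyb
      have happ : ψ t ht yb = ⟨(y : EuclideanSpace ℝ (Fin N)), hy⟩ :=
        (ψ t ht).apply_symm_apply _
      have hsph : (yb : EuclideanSpace ℝ (Fin (m + 1))) ∈
          sphere (0 : EuclideanSpace ℝ (Fin (m + 1))) 1 := by
        refine (hψbd t ht yb).2 ?_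
        obtain ⟨a, hat, ha⟩ := hcap t ht y hy h0
        exact ⟨a, hat, by rw [happ]; exact ha⟩
      have hmm : ((ψ t ht yb : EuclideanSpace ℝ (Fin N))) ∈ Mset K L m := by
        rw [happ]; exact h0
      rw [hgDf t ht yb hsph hmm]
      have hveq : ((ψ t ht) yb : EuclideanSpace ℝ (Fin N)) = ↑y := Subtype.ext_iff.1 happ
      exact (congrArg f (Subtype.ext hveq)).symm
    · simp only [hG]
      rw [dif_neg h0]
      have hspec := Classical.choose_spec (hcover y y.2 h0)
      exact hcongr y _ t hspec.1 ht
        (by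
          by_contra hne
          have h1 := hspec.1
          obtain ⟨a, hac, hanot⟩ : ∃ a ∈ Classical.choose (hcover ↑y y.2 h0), a ∉ t := by
            apply Finset.not_subset.1
            intro hsub
            exact hne (Finset.eq_of_subset_of_card_le hsub (by rw [h1.2.1, ht.2.1]))
          obtain ⟨a', ha', hmem⟩ := hkey _ h1 t ht.1 (Finset.not_subset.2 ⟨a, hac, hanot⟩)
            y hspec.2 hy
          exact h0 (hbdM _ h1 a' ha' hmem))
        hspec.2 hy
  -- continuity
  haveI : Fintype ↥T := hTfin.fintype
  have hGcont : Continuous G := by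
    set F : Option ↥T → Set (↥(Mset K L (m + 1))) := fun o =>
      match o with
      | none => {y | (y : EuclideanSpace ℝ (Fin N)) ∈ Mset K L m}
      | some t => {y | (y : EuclideanSpace ℝ (Fin N)) ∈
          convexHull ℝ ((t : Finset (EuclideanSpace ℝ (Fin N))) :
            Set (EuclideanSpace ℝ (Fin N)))} with hF
    apply LocallyFinite.continuous (f := F) (locallyFinite_of_finite F)
    · apply Set.eq_univ_of_forall
      intro y
      by_cases h0 : (y : EuclideanSpace ℝ (Fin N)) ∈ Mset K L m
      · exact Set.mem_iUnion.2 ⟨none, h0⟩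
      · obtain ⟨t, ht, hyt⟩ := hcover y y.2 h0
        exact Set.mem_iUnion.2 ⟨some ⟨t, ht⟩, hyt⟩
    · rintro (_ | t)
      · exact (Mset_isClosed K L hKfin hLK m).preimage continuous_subtype_val
      · exact (((t : Finset (EuclideanSpace ℝ (Fin N))).finite_toSet.isCompact_convexHull ℝ).isClosed).preimage
          continuous_subtype_val
    · rintro (_ | t)
      · rw [continuousOn_iff_continuous_restrict]
        have : Set.domRestrict (F none) G = fun y => f ⟨y.1.1, y.2⟩ :=
          funext fun y => hGf _ y.2
        rw [this]
        apply f.continuous.comp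
        exact Continuous.subtype_mk (continuous_subtype_val.comp continuous_subtype_val) _
      · rw [continuousOn_iff_continuous_restrict]
        have : Set.domRestrict (F (some t)) G = fun y =>
            gD t t.2 ((ψ t t.2).symm ⟨y.1.1, y.2⟩) :=
          funext fun y => hGt t t.2 _ y.2
        rw [this]
        apply gD t t.2 |>.continuous.comp
        apply (ψ t t.2).symm.continuous.comp
        exact Continuous.subtype_mk (continuous_subtype_val.comp continuous_subtype_val) _
  refine ⟨⟨G, hGcont⟩, ?_, ?_⟩
  · intro y
    have h0 : ((Set.inclusion (Mset_mono K L (Nat.sub_le (m + 1) 1)) y :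
        ↥(Mset K L (m + 1))) : EuclideanSpace ℝ (Fin N)) ∈ Mset K L m := y.2
    simp only [ContinuousMap.coe_mk]
    rw [hGf _ h0]
  · intro σ hσ hσcard
    obtain ⟨W, hW𝒲, hWf⟩ := hf σ hσ hσcard
    have hσne : σ.Nonempty := Finset.card_pos.1 (by omega)
    obtain ⟨v₀, hv₀⟩ := hσne
    set y₀ : ↥(Mset K L m) := ⟨v₀, vertex_mem_Mset K L m hσ hv₀⟩ with hy₀
    have hfy₀ : f y₀ ∈ W := hWf y₀ (subset_convexHull _ _ hv₀)
    obtain ⟨U, hU, hsubU⟩ := hVU (f y₀)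
    refine ⟨U, hU, ?_⟩
    intro y hyσ
    by_cases h0 : (y : EuclideanSpace ℝ (Fin N)) ∈ Mset K L m
    · have := hGf y h0
      simp only [ContinuousMap.coe_mk]
      rw [this]
      obtain ⟨V', hV', hWV'⟩ := hWV.1 W hW𝒲
      exact hsubU ⟨V', ⟨hV', hWV' hfy₀⟩, hWV' (hWf ⟨y, h0⟩ hyσ)⟩
    · obtain ⟨t, ht, hyt⟩ := hcover y y.2 h0
      simp only [ContinuousMap.coe_mk]
      rw [hGt t ht y hyt]
      have hval : gD t ht ((ψ t ht).symm ⟨y, hyt⟩) ∈ V t ht :=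
        hgDrange t ht (mem_range_self _)
      have htσ : t ⊆ σ := by
        by_contra hns
        obtain ⟨a', ha', hmem⟩ := hkey t ht σ hσ hns y hyt hyσ
        exact h0 (hbdM t ht a' ha' hmem)
      have hz1 : ((z t ht : EuclideanSpace ℝ (Fin N))) ∈
          convexHull ℝ (σ : Set (EuclideanSpace ℝ (Fin N))) :=
        convexHull_mono (Finset.coe_subset.2 htσ) (hzt t ht)
      have hz2 : f (z t ht) ∈ W := hWf (z t ht) hz1
      have hfy₀V : f y₀ ∈ V t ht := hptV t ht ⟨W, ⟨hW𝒲, hz2⟩, hfy₀⟩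
      exact hsubU ⟨V t ht, ⟨hV𝒱 t ht, hfy₀V⟩, hval⟩
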